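/- arXiv:1705.03673 — 3 statements merged into one kernel-verified Lean document; each statement's English description precedes it below -/
import Mathlib

section
/- Let G = (V, A) be a finite directed graph with distinct vertices s and t, let p ≥ 1 and k ≥ 0. For K ⊆ A, let G(K,p) denote the directed multigraph obtained from G by replacing each arc in K by p parallel copies. Then G admits p s-t walks sharing at most k arcs if and only if there exists K ⊆ A with |K| ≤ k such that G(K,p) admits p s-t walks sharing no arc. Moreover, for any α ≥ 1, the same equivalence holds when all walks are additionally required to have length at most α. -/
namespace PaperRCA

/-- A walk in a directed graph with arc relation `A`: a nonempty list of vertices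
in which each consecutive pair is an arc. -/
def IsDiWalk {V : Type*} (A : V → V → Prop) (w : List V) : Prop :=
  w ≠ [] ∧ w.Chain' A

/-- The list of arcs of a walk. -/
def walkArcs {V : Type*} (w : List V) : List (V × V) := w.zip w.tail

/-- An arc `a` is shared by the family of walks `W` if it occurs at the same
position in two distinct walks of the family. -/
def SharedArc {V : Type*} {p : ℕ} (W : Fin p → List V) (a : V × V) : Prop :=
  ∃ i j : Fin p, i ≠ j ∧ ∃ r : ℕ,
    (walkArcs (W i))[r]? = some a ∧ (walkArcs (W j))[r]? = some a

/-- A walk in a directed multigraph with arc (edge) type `E`, tail map `tl` and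
head map `hd`, from `s` to `t`: a nonempty list of arcs, consecutive arcs being
incident, the first arc starting at `s` and the last ending at `t`. -/
def IsDiMultiWalk {V E : Type*} (tl hd : E → V) (s t : V) (es : List E) : Prop :=
  es.head?.map tl = some s ∧ es.getLast?.map hd = some t ∧
  es.Chain' (fun e f => hd e = tl f)

/-- An individual arc copy `e` is shared by a family of multigraph walks if it
occurs at the same position in two distinct walks of the family. -/
def SharedMultiArc {E : Type*} {p : ℕ} (W : Fin p → List E) (e : E) : Prop :=
  ∃ i j : Fin p, i ≠ j ∧ ∃ r : ℕ, (W i)[r]? = some e ∧ (W j)[r]? = some e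

/-- Arcs of the multigraph `G(K,p)` obtained from the digraph `A` by replacing every
arc in `K` by `p` parallel copies: an arc is a pair `(a, c)` where `a` is an arc of
`A` and `c < p` is the index of the copy, with `c = 0` unless `a ∈ K`. -/
def MultiArcOK {V : Type*} (A : V → V → Prop) (K : Set (V × V)) (p : ℕ)
    (e : (V × V) × Fin p) : Prop :=
  A e.1.1 e.1.2 ∧ (e.1 ∈ K ∨ (e.2 : ℕ) = 0)

lemma walkArcs_getElem? {V : Type*} (w : List V) (r : ℕ) (a : V × V) :
    (walkArcs w)[r]? = some a ↔ w[r]? = some a.1 ∧ w[r+1]? = some a.2 := by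
  simp [walkArcs, List.getElem?_zip_eq_some, List.getElem?_tail]

lemma chain'_getElem? {V : Type*} {R : V → V → Prop} {l : List V} (h : l.Chain' R)
    {i : ℕ} {a b : V} (ha : l[i]? = some a) (hb : l[i+1]? = some b) : R a b := by
  unfold List.Chain' at h; rw [List.isChain_iff_getElem] at h
  have hib : i + 1 < l.length := by
    by_contra hc
    rw [List.getElem?_eq_none (by omega)] at hb; simp at hb
  have := h i (by omega)
  rw [List.getElem?_eq_getElem (by omega)] at ha
  rw [List.getElem?_eq_getElem (by omega)] at hb
  rw [Option.some_inj] at ha hb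
  rwa [ha, hb] at this

lemma chain'_of_getElem? {V : Type*} {R : V → V → Prop} {l : List V}
    (h : ∀ (i : ℕ) (a b : V), l[i]? = some a → l[i+1]? = some b → R a b) :
    l.Chain' R := by
  unfold List.Chain'; rw [List.isChain_iff_getElem]
  intro i hi
  exact h i _ _ (by rw [List.getElem?_eq_getElem (by omega)])
    (by rw [List.getElem?_eq_getElem (by omega)])

lemma walkArcs_length {V : Type*} (w : List V) : (walkArcs w).length = w.length - 1 := by
  simp [walkArcs]

lemma walkArcs_cons_cons {V : Type*} (a b : V) (l : List V) :
    walkArcs (a :: b :: l) = (a, b) :: walkArcs (b :: l) := rfl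

lemma arcsOf {V E : Type*} (tl hd : E → V) (t : V) :
    ∀ es : List E, es.Chain' (fun e f => hd e = tl f) →
      es.getLast?.map hd = some t →
      walkArcs (es.map tl ++ [t]) = es.map (fun e => (tl e, hd e))
  | [], _, hl => by simp at hl
  | [e], _, hl => by
      simp only [List.getLast?_singleton, Option.map_some, Option.some_inj] at hl
      simp [walkArcs, hl]
  | e :: f :: es, hc, hl => by
      unfold List.Chain' at hc; rw [List.isChain_cons_cons] at hc
      have ih := arcsOf tl hd t (f :: es) hc.2 (by simpa using hl)
      simp only [List.map_cons, List.cons_append, walkArcs_cons_cons] at ih ⊢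
      rw [hc.1, ih]

lemma mem_walkArcs_arc {V : Type*} {A : V → V → Prop} {w : List V} (hch : w.Chain' A)
    {a : V × V} (ha : a ∈ walkArcs w) : A a.1 a.2 := by
  obtain ⟨r, hr⟩ := List.mem_iff_getElem?.mp ha
  rw [walkArcs_getElem?] at hr
  exact chain'_getElem? hch hr.1 hr.2

attribute [local instance] Classical.propDecidable

lemma fwd {V : Type*} {A : V → V → Prop} {s t : V} (hst : s ≠ t) {p : ℕ} (hp : 1 ≤ p)
    (W : Fin p → List V)
    (hW : ∀ i, IsDiWalk A (W i) ∧ (W i).head? = some s ∧ (W i).getLast? = some t) :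
    ∃ F : Fin p → List ((V × V) × Fin p),
      (∀ i, (∀ e ∈ F i, MultiArcOK A {a | SharedArc W a} p e) ∧
        IsDiMultiWalk (fun e => e.1.1) (fun e => e.1.2) s t (F i) ∧
        (F i).length + 1 = (W i).length) ∧
      ∀ e, ¬ SharedMultiArc F e := by
  set K : Set (V × V) := {a | SharedArc W a} with hK
  refine ⟨fun i => (walkArcs (W i)).map (fun a => (a, if a ∈ K then i else ⟨0, hp⟩)),
    fun i => ?_, ?_⟩
  · obtain ⟨⟨hne, hch⟩, hh, hl⟩ := hW i
    have h2 : 2 ≤ (W i).length := by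
      rcases hw : W i with _ | ⟨x, _ | ⟨y, l⟩⟩
      · exact absurd hw hne
      · rw [hw] at hh hl
        simp only [List.head?_cons, Option.some_inj] at hh
        simp only [List.getLast?_singleton, Option.some_inj] at hl
        exact absurd (hh ▸ hl ▸ rfl) hst
      · simp [hw]
    have hlen : (walkArcs (W i)).length = (W i).length - 1 := walkArcs_length _
    refine ⟨?_, ⟨?_, ?_, ?_⟩, by simp [hlen]; omega⟩
    · intro e he
      obtain ⟨a, ha, rfl⟩ := List.mem_map.mp he
      refine ⟨mem_walkArcs_arc hch ha, ?_⟩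
      by_cases haK : a ∈ K
      · exact Or.inl (by simpa using haK)
      · simp [haK]
    · -- head
      have h0 : (walkArcs (W i))[0]? = some ((walkArcs (W i))[0]'(by omega)) :=
        List.getElem?_eq_getElem (by omega)
      have h0' := (walkArcs_getElem? _ _ _).mp h0
      rw [← List.head?_eq_getElem?, hh] at h0'
      rw [List.head?_map, List.head?_eq_getElem?, h0]
      simpa using (Option.some_inj.mp h0'.1).symm
    · -- last
      set m := (walkArcs (W i)).length - 1 with hm
      have hml : m < (walkArcs (W i)).length := by omega
      have h0 : (walkArcs (W i))[m]? = some ((walkArcs (W i))[m]'hml) :=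
        List.getElem?_eq_getElem hml
      have h0' := (walkArcs_getElem? _ _ _).mp h0
      have hmi : m + 1 = (W i).length - 1 := by omega
      rw [hmi, ← List.getLast?_eq_getElem?, hl] at h0'
      rw [List.getLast?_map, List.getLast?_eq_getElem?, ← hm, h0]
      simpa using (Option.some_inj.mp h0'.2).symm
    · -- chain
      unfold List.Chain'; rw [List.isChain_map]
      refine chain'_of_getElem? fun r a b ha hb => ?_
      rw [walkArcs_getElem?] at ha hb
      simpa using (ha.2.symm.trans hb.1)
  · rintro e ⟨i, j, hij, r, hi, hj⟩
    rw [List.getElem?_map, Option.map_eq_some_iff] at hi hj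
    obtain ⟨a, ha, hae⟩ := hi
    obtain ⟨b, hb, hbe⟩ := hj
    have hab : a = b := by
      have := (congrArg Prod.fst hae).trans (congrArg Prod.fst hbe).symm
      simpa using this
    subst hab
    have haK : a ∈ K := ⟨i, j, hij, r, ha, hb⟩
    have h1 := congrArg Prod.snd hae
    have h2 := congrArg Prod.snd hbe
    simp only [if_pos haK] at h1 h2
    exact hij ((h1.trans h2.symm))

lemma bwd {V : Type*} {A : V → V → Prop} {s t : V} {p : ℕ} {K : Set (V × V)}
    (F : Fin p → List ((V × V) × Fin p))
    (hF : ∀ i, (∀ e ∈ F i, MultiArcOK A K p e) ∧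
      IsDiMultiWalk (fun e => e.1.1) (fun e => e.1.2) s t (F i))
    (hsh : ∀ e : (V × V) × Fin p, ¬ SharedMultiArc F e) :
    ∃ W : Fin p → List V,
      (∀ i, IsDiWalk A (W i) ∧ (W i).head? = some s ∧ (W i).getLast? = some t ∧
        (W i).length = (F i).length + 1) ∧
      {a | SharedArc W a} ⊆ K := by
  refine ⟨fun i => (F i).map (fun e => e.1.1) ++ [t], fun i => ?_, ?_⟩
  · obtain ⟨hok, hh, hl, hc⟩ := hF i
    have harcs : walkArcs ((F i).map (fun e => e.1.1) ++ [t]) =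
        (F i).map (fun e => e.1) := arcsOf _ _ t (F i) hc hl
    have hne : F i ≠ [] := by rintro h; rw [h] at hh; simp at hh
    obtain ⟨e, es, hFe⟩ := List.exists_cons_of_ne_nil hne
    refine ⟨⟨by simp, ?_⟩, ?_, by simp [List.getLast?_concat], by simp⟩
    · refine chain'_of_getElem? fun r a b ha hb => ?_
      have : (walkArcs ((F i).map (fun e => e.1.1) ++ [t]))[r]? = some (a, b) :=
        (walkArcs_getElem? _ _ _).mpr ⟨ha, hb⟩
      rw [harcs, List.getElem?_map, Option.map_eq_some_iff] at this
      obtain ⟨f, hf, hfe⟩ := this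
      have hmem : f ∈ F i := List.mem_of_getElem? hf
      have := (hok f hmem).1
      rw [hfe] at this
      exact this
    · simp only [hFe, List.map_cons, List.cons_append, List.head?_cons]
      rw [hFe] at hh
      simpa using hh
  · rintro a ⟨i, j, hij, r, hi, hj⟩
    obtain ⟨hoki, _, hli, hci⟩ := hF i
    obtain ⟨hokj, _, hlj, hcj⟩ := hF j
    rw [arcsOf _ _ t (F i) hci hli, List.getElem?_map, Option.map_eq_some_iff] at hi
    rw [arcsOf _ _ t (F j) hcj hlj, List.getElem?_map, Option.map_eq_some_iff] at hj
    obtain ⟨e, he, hea⟩ := hi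
    obtain ⟨f, hf, hfa⟩ := hj
    have hef : e ≠ f := by
      rintro rfl
      exact hsh e ⟨i, j, hij, r, he, hf⟩
    have h1 := (hoki e (List.mem_of_getElem? he)).2
    have h2 := (hokj f (List.mem_of_getElem? hf)).2
    have hea' : e.1 = a := by simpa using hea
    have hfa' : f.1 = a := by simpa using hfa
    rcases h1 with h1 | h1
    · rwa [hea'] at h1
    rcases h2 with h2 | h2
    · rwa [hfa'] at h2
    exact absurd (Prod.ext (hea'.trans hfa'.symm) (Fin.ext (h1.trans h2.symm))) hef

lemma sharedArc_arc {V : Type*} {p : ℕ} {A : V → V → Prop} {W : Fin p → List V}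
    (hW : ∀ i, (W i).Chain' A) {a : V × V} (h : SharedArc W a) : A a.1 a.2 := by
  obtain ⟨i, j, hij, r, hi, hj⟩ := h
  rw [walkArcs_getElem?] at hi
  exact chain'_getElem? (hW i) hi.1 hi.2

/-- `G` admits `p` `s`-`t` walks sharing at most `k` arcs iff there
is `K ⊆ A` with `|K| ≤ k` such that `G(K,p)` admits `p` `s`-`t` walks sharing no arc;
moreover, for any `α ≥ 1` the same equivalence holds when all walks are required to
have length at most `α`. -/
theorem stmt1 {V : Type*} [Fintype V] (A : V → V → Prop) (s t : V) (hst : s ≠ t)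
    (p k : ℕ) (hp : 1 ≤ p) :
    ((∃ W : Fin p → List V,
        (∀ i : Fin p, IsDiWalk A (W i) ∧ (W i).head? = some s ∧
          (W i).getLast? = some t) ∧
        {a : V × V | SharedArc W a}.ncard ≤ k) ↔
      (∃ K : Set (V × V), K ⊆ {a : V × V | A a.1 a.2} ∧ K.ncard ≤ k ∧
        ∃ F : Fin p → List ((V × V) × Fin p),
          (∀ i : Fin p, (∀ e ∈ F i, MultiArcOK A K p e) ∧
            IsDiMultiWalk (fun e => e.1.1) (fun e => e.1.2) s t (F i)) ∧
          ∀ e : (V × V) × Fin p, ¬ SharedMultiArc F e))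
    ∧
    (∀ α : ℕ, 1 ≤ α →
      ((∃ W : Fin p → List V,
          (∀ i : Fin p, IsDiWalk A (W i) ∧ (W i).head? = some s ∧
            (W i).getLast? = some t ∧ (W i).length ≤ α + 1) ∧
          {a : V × V | SharedArc W a}.ncard ≤ k) ↔
        (∃ K : Set (V × V), K ⊆ {a : V × V | A a.1 a.2} ∧ K.ncard ≤ k ∧
          ∃ F : Fin p → List ((V × V) × Fin p),
            (∀ i : Fin p, (∀ e ∈ F i, MultiArcOK A K p e) ∧
              IsDiMultiWalk (fun e => e.1.1) (fun e => e.1.2) s t (F i) ∧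
              (F i).length ≤ α) ∧
            ∀ e : (V × V) × Fin p, ¬ SharedMultiArc F e))) := by
  constructor
  · constructor
    · rintro ⟨W, hW, hcard⟩
      obtain ⟨F, hF, hsh⟩ := fwd hst hp W hW
      exact ⟨{a | SharedArc W a}, fun a ha => sharedArc_arc (fun i => (hW i).1.2) ha,
        hcard, F, fun i => ⟨(hF i).1, (hF i).2.1⟩, hsh⟩
    · rintro ⟨K, hKsub, hKcard, F, hF, hsh⟩
      obtain ⟨W, hW, hsub⟩ := bwd F hF hsh
      exact ⟨W, fun i => ⟨(hW i).1, (hW i).2.1, (hW i).2.2.1⟩,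
        le_trans (Set.ncard_le_ncard hsub (Set.toFinite K)) hKcard⟩
  · intro α _
    constructor
    · rintro ⟨W, hW, hcard⟩
      obtain ⟨F, hF, hsh⟩ :=
        fwd hst hp W (fun i => ⟨(hW i).1, (hW i).2.1, (hW i).2.2.1⟩)
      refine ⟨{a | SharedArc W a}, fun a ha => sharedArc_arc (fun i => (hW i).1.2) ha,
        hcard, F, fun i => ⟨(hF i).1, (hF i).2.1, ?_⟩, hsh⟩
      have h1 := (hF i).2.2
      have h2 := (hW i).2.2.2
      omega
    · rintro ⟨K, hKsub, hKcard, F, hF, hsh⟩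
      obtain ⟨W, hW, hsub⟩ := bwd F (fun i => ⟨(hF i).1, (hF i).2.1⟩) hsh
      refine ⟨W, fun i => ⟨(hW i).1, (hW i).2.1, (hW i).2.2.1, ?_⟩,
        le_trans (Set.ncard_le_ncard hsub (Set.toFinite K)) hKcard⟩
      have h1 := (hW i).2.2.2
      have h2 := (hF i).2.2
      omega


end PaperRCA
end

section
/- Every s-t walk in the directed acyclic graph G of the Set Cover construction has length exactly ℓ + 3; in particular, every s-t walk in G has length at most ℓ + 3. -/
namespace PaperRCA

/-- Vertices of the Set Cover construction with universe size `n`, family size `m`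
and budget `ℓ`: the source `s`, the sink `t`, element vertices `u i` (the `vᵢ`),
set vertices `f j` (the `wⱼ`), the internal vertices `cu i r` of the `(ℓ+1)`-chain
from `s` to `vᵢ`, and the internal vertices `cf j r` of the `(ℓ+2)`-chain from `s`
to `wⱼ`. -/
inductive SCVertex (n m ℓ : ℕ) where
  | s : SCVertex n m ℓ
  | t : SCVertex n m ℓ
  | u (i : Fin n) : SCVertex n m ℓ
  | f (j : Fin m) : SCVertex n m ℓ
  | cu (i : Fin n) (r : Fin ℓ) : SCVertex n m ℓ
  | cf (j : Fin m) (r : Fin (ℓ + 1)) : SCVertex n m ℓ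

/-- Arcs of the Set Cover construction for the family `F`. -/
def SCArc {n m ℓ : ℕ} (F : Fin m → Set (Fin n)) :
    SCVertex n m ℓ → SCVertex n m ℓ → Prop
  | .s, .cu _ r => (r : ℕ) = 0
  | .s, .u _ => ℓ = 0
  | .s, .cf _ r => (r : ℕ) = 0
  | .cu i r, .cu i' r' => i = i' ∧ (r' : ℕ) = (r : ℕ) + 1
  | .cu i r, .u i' => i = i' ∧ (r : ℕ) + 1 = ℓ
  | .cf j r, .cf j' r' => j = j' ∧ (r' : ℕ) = (r : ℕ) + 1
  | .cf j r, .f j' => j = j' ∧ (r : ℕ) = ℓ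
  | .u i, .f j => i ∈ F j
  | .f _, .t => True
  | _, _ => False

def level {n m ℓ : ℕ} : SCVertex n m ℓ → ℕ
  | .s => 0
  | .cu _ r => r + 1
  | .u _ => ℓ + 1
  | .cf _ r => r + 1
  | .f _ => ℓ + 2
  | .t => ℓ + 3

lemma level_step {n m ℓ : ℕ} (F : Fin m → Set (Fin n)) :
    ∀ a b : SCVertex n m ℓ, SCArc F a b → level b = level a + 1 := by
  rintro a b h
  cases a <;> cases b <;> simp_all [SCArc, level] <;> omega

lemma chain_level {n m ℓ : ℕ} (F : Fin m → Set (Fin n)) :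
    ∀ (l : List (SCVertex n m ℓ)) (a : SCVertex n m ℓ),
      List.Chain (SCArc F) a l →
      level ((a :: l).getLast (by simp)) = level a + l.length := by
  intro l
  induction l with
  | nil => intro a _; simp [List.getLast]
  | cons b l ih =>
    intro a h
    change List.IsChain (SCArc F) (a :: b :: l) at h
    rw [List.chain_cons] at h
    have := ih b h.2
    rw [List.getLast_cons (by simp)]
    rw [this, level_step F a b h.1]
    simp; omega

/-- Every `s`-`t` walk in the DAG of the Set Cover construction has
length exactly `ℓ + 3` (a walk on a vertex list `w` has length `w.length - 1`, so
this says `w.length = ℓ + 4`); in particular every `s`-`t` walk has length at most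
`ℓ + 3`. -/
theorem stmt3 (n m ℓ : ℕ) (hℓ : ℓ ≤ m) (F : Fin m → Set (Fin n))
    (w : List (SCVertex n m ℓ)) (hw : IsDiWalk (SCArc F) w)
    (hs : w.head? = some SCVertex.s) (ht : w.getLast? = some SCVertex.t) :
    w.length = ℓ + 4 := by
  obtain ⟨hne, hch⟩ := hw
  obtain ⟨a, l, rfl⟩ := List.exists_cons_of_ne_nil hne
  simp only [List.head?_cons, Option.some.injEq] at hs
  subst hs
  change List.IsChain (SCArc F) (SCVertex.s :: l) at hch
  rw [List.isChain_cons] at hch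
  have hchain : List.Chain (SCArc F) SCVertex.s l := by
    cases l with
    | nil => exact List.Chain.nil
    | cons b l' =>
      exact List.chain_cons.mpr ⟨hch.1 b rfl, hch.2⟩
  have key := chain_level F l SCVertex.s hchain
  rw [List.getLast?_eq_getLast (h := by simp), Option.some.injEq] at ht
  rw [ht] at key
  simp [level] at key
  simp [key]

end PaperRCA
end

section
/- Let G be a connected undirected graph with distinct vertices s and t, and let p ≥ 1. Then G admits p s-t walks sharing no edge if and only if the degree of s in G is at least p. -/
namespace PaperRCA

/-- A walk in an undirected (simple) graph `G`: a nonempty list of vertices in which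
consecutive vertices are adjacent. -/
def IsGWalk {V : Type*} (G : SimpleGraph V) (w : List V) : Prop :=
  w ≠ [] ∧ w.Chain' G.Adj

/-- The list of (unordered) edges of a walk. -/
def walkEdges {V : Type*} (w : List V) : List (Sym2 V) :=
  (w.zip w.tail).map (fun q => s(q.1, q.2))

/-- An edge `e` is shared by the family of walks `W` if it occurs at the same
position in two distinct walks of the family. -/
def SharedEdge {V : Type*} {p : ℕ} (W : Fin p → List V) (e : Sym2 V) : Prop :=
  ∃ i j : Fin p, i ≠ j ∧ ∃ r : ℕ,
    (walkEdges (W i))[r]? = some e ∧ (walkEdges (W j))[r]? = some e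

section Aux
variable {V : Type*}

lemma walkEdges_cons_cons (a b : V) (l : List V) :
    walkEdges (a :: b :: l) = s(a, b) :: walkEdges (b :: l) := rfl

lemma walkEdges_getElem?_some :
    ∀ (l : List V) (r : ℕ) (e : Sym2 V), (walkEdges l)[r]? = some e →
      ∃ a b, l[r]? = some a ∧ l[r+1]? = some b ∧ e = s(a, b)
  | [], r, e => by simp [walkEdges]
  | [a], r, e => by simp [walkEdges]
  | a :: b :: l, 0, e => by
      rw [walkEdges_cons_cons]
      intro h
      simp only [List.getElem?_cons_zero, Option.some.injEq] at h
      exact ⟨a, b, by simp, by simp, h.symm⟩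
  | a :: b :: l, r+1, e => by
      rw [walkEdges_cons_cons]
      intro h
      simp only [List.getElem?_cons_succ] at h
      obtain ⟨x, y, h1, h2, h3⟩ := walkEdges_getElem?_some (b :: l) r e h
      exact ⟨x, y, by simpa using h1, by simpa using h2, h3⟩

/-- Bounce `k` times between `s` and `n`, then continue with `s :: rest`. -/
def bwalk (s n : V) (rest : List V) : ℕ → List V
  | 0 => s :: rest
  | k + 1 => s :: n :: bwalk s n rest k

lemma bwalk_ne_nil (s n : V) (rest : List V) (k : ℕ) : bwalk s n rest k ≠ [] := by
  cases k <;> simp [bwalk]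

lemma bwalk_head_cons (s n : V) (rest : List V) (k : ℕ) :
    bwalk s n rest k = s :: (bwalk s n rest k).tail := by
  cases k <;> rfl

lemma bwalk_head? (s n : V) (rest : List V) (k : ℕ) :
    (bwalk s n rest k).head? = some s := by
  cases k <;> rfl

lemma bwalk_chain' {G : SimpleGraph V} {s n : V} {rest : List V}
    (h : G.Adj s n) (hc : List.Chain' G.Adj (s :: rest)) :
    ∀ k, (bwalk s n rest k).Chain' G.Adj
  | 0 => hc
  | k + 1 => by
      have ih := bwalk_chain' h hc k
      show List.Chain' G.Adj (s :: n :: bwalk s n rest k)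
      refine List.isChain_cons_cons.2 ⟨h, ?_⟩
      refine List.isChain_cons.2 ⟨?_, ih⟩
      intro y hy
      rw [bwalk_head? s n rest k, Option.mem_def, Option.some.injEq] at hy
      subst hy
      exact h.symm

lemma bwalk_walkEdges {s n : V} {rest : List V} :
    ∀ k, walkEdges (bwalk s n rest k)
      = List.replicate (2 * k) s(s, n) ++ walkEdges (s :: rest)
  | 0 => by simp [bwalk]
  | k + 1 => by
      have ih := bwalk_walkEdges (s := s) (n := n) (rest := rest) k
      show walkEdges (s :: n :: bwalk s n rest k) = _
      rw [walkEdges_cons_cons]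
      rw [bwalk_head_cons s n rest k, walkEdges_cons_cons, ← bwalk_head_cons, ih]
      have h2 : 2 * (k + 1) = (2 * k) + 1 + 1 := by ring
      rw [h2, List.replicate_succ, List.replicate_succ]
      simp [Sym2.eq_swap]

lemma bwalk_getLast? {s n : V} {rest : List V} (h : rest ≠ []) :
    ∀ k, (bwalk s n rest k).getLast? = rest.getLast?
  | 0 => by
      obtain ⟨r, rs, rfl⟩ := List.exists_cons_of_ne_nil h
      exact List.getLast?_cons_cons
  | k + 1 => by
      have ih := bwalk_getLast? (s := s) (n := n) h k
      show (s :: n :: bwalk s n rest k).getLast? = _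
      rw [List.getLast?_cons_cons, bwalk_head_cons s n rest k,
        List.getLast?_cons_cons, ← bwalk_head_cons, ih]

lemma getElem?_replicate_append (x : Sym2 V) (a r : ℕ) (l : List (Sym2 V)) :
    (List.replicate a x ++ l)[r]? = if r < a then some x else l[r - a]? := by
  by_cases h : r < a
  · rw [List.getElem?_append_left (by simpa using h), if_pos h,
      List.getElem?_replicate, if_pos h]
  · rw [List.getElem?_append_right (by simpa using Nat.not_lt.1 h), if_neg h,
      List.length_replicate]

lemma sym2_right_eq {s a b : V} (ha : a ≠ s) (h : s(s, a) = s(s, b)) : a = b := by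
  rcases Sym2.eq_iff.1 h with ⟨_, h2⟩ | ⟨h1, h2⟩
  · exact h2
  · exact absurd h2 ha

end Aux

/-- A connected undirected graph `G` with distinct vertices
`s, t` admits `p` `s`-`t` walks sharing no edge iff the degree of `s` is at
least `p`. -/
theorem stmt12 {V : Type*} [Fintype V] (G : SimpleGraph V) [DecidableRel G.Adj]
    (hconn : G.Connected) (s t : V) (hst : s ≠ t) (p : ℕ) (hp : 1 ≤ p) :
    (∃ W : Fin p → List V,
      (∀ i : Fin p, IsGWalk G (W i) ∧ (W i).head? = some s ∧
        (W i).getLast? = some t) ∧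
      ∀ e : Sym2 V, ¬ SharedEdge W e) ↔
    p ≤ G.degree s := by
  constructor
  · rintro ⟨W, hW, hsh⟩
    have key : ∀ i : Fin p, ∃ b, G.Adj s b ∧ (walkEdges (W i))[0]? = some s(s, b) := by
      intro i
      obtain ⟨⟨hne, hch⟩, hh, hl⟩ := hW i
      match hw : W i with
      | [] => exact absurd hw hne
      | [x] =>
          rw [hw] at hh hl
          simp only [List.head?_cons, List.getLast?_singleton, Option.some.injEq] at hh hl
          exact absurd (hh.symm.trans hl) hst
      | a :: b :: l =>
          rw [hw] at hh hch
          simp only [List.head?_cons, Option.some.injEq] at hh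
          subst hh
          exact ⟨b, (List.isChain_cons_cons.1 hch).1, by rw [walkEdges_cons_cons]; simp⟩
    choose b hb1 hb2 using key
    have binj : Function.Injective b := by
      intro i j hbij
      by_contra hij
      exact hsh s(s, b i) ⟨i, j, hij, 0, hb2 i, by rw [hbij]; exact hb2 j⟩
    have binj' : Function.Injective (fun i : Fin p => (⟨b i, hb1 i⟩ : G.neighborSet s)) :=
      fun i j h => binj (congrArg Subtype.val h)
    calc p = Fintype.card (Fin p) := (Fintype.card_fin p).symm
      _ ≤ Fintype.card (G.neighborSet s) := Fintype.card_le_of_injective _ binj'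
      _ = G.degree s := G.card_neighborSet_eq_degree s
  · intro hdeg
    classical
    obtain ⟨pw⟩ := hconn.preconnected s t
    obtain ⟨pv, hpath⟩ := pw.toPath
    have hnd : pv.support.Nodup := hpath.support_nodup
    have hchain : pv.support.Chain' G.Adj := pv.isChain_adj_support
    have hnn : pv.support ≠ [] := pv.support_ne_nil
    have hhead : pv.support.head? = some s := by
      rw [List.head?_eq_head hnn, pv.head_support]
    have hlast : pv.support.getLast? = some t := by
      rw [List.getLast?_eq_getLast hnn, pv.getLast_support]
    obtain ⟨q, rest, hps⟩ : ∃ q rest, pv.support = s :: q :: rest := by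
      match hw : pv.support with
      | [] => exact absurd hw hnn
      | [x] =>
          rw [hw] at hhead hlast
          simp only [List.head?_cons, List.getLast?_singleton, Option.some.injEq] at hhead hlast
          exact absurd (hhead.symm.trans hlast) hst
      | a :: c :: l =>
          rw [hw] at hhead
          simp only [List.head?_cons, Option.some.injEq] at hhead
          subst hhead
          exact ⟨c, l, rfl⟩
    obtain ⟨g, hg⟩ := Function.Embedding.exists_of_card_le_finset
      (α := Fin p) (s := G.neighborFinset s) (by rw [Fintype.card_fin]; exact hdeg)
    have gadj : ∀ i : Fin p, G.Adj s (g i) := by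
      intro i
      have h1 := hg (Set.mem_range_self i)
      rwa [Finset.mem_coe, SimpleGraph.mem_neighborFinset] at h1
    obtain ⟨f, finj, fadj, fq⟩ : ∃ f : Fin p → V, Function.Injective f ∧
        (∀ i, G.Adj s (f i)) ∧ ∀ j, f j = q → (j : ℕ) = 0 := by
      by_cases hq : ∃ i0, g i0 = q
      · obtain ⟨i0, hi0⟩ := hq
        refine ⟨fun i => g (Equiv.swap ⟨0, hp⟩ i0 i), g.injective.comp (Equiv.injective _),
          fun i => gadj _, ?_⟩
        intro j hj
        have h1 : Equiv.swap ⟨0, hp⟩ i0 j = i0 := g.injective (hj.trans hi0.symm)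
        have hj0 : j = ⟨0, hp⟩ :=
          (Equiv.swap ⟨0, hp⟩ i0).injective (by rw [h1, Equiv.swap_apply_left])
        exact congrArg Fin.val hj0
      · push_neg at hq
        exact ⟨g, g.injective, gadj, fun j hj => absurd hj (hq j)⟩
    set pe := walkEdges pv.support with hpe_def
    set m := pe.length with hm
    have hpe0 : pe[0]? = some s(s, q) := by rw [hpe_def, hps, walkEdges_cons_cons]; simp
    have hm1 : 1 ≤ m := by
      rw [hm, hpe_def, hps, walkEdges_cons_cons]
      simp
    have hqrest : (q :: rest : List V) ≠ [] := List.cons_ne_nil _ _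
    have hlast2 : (q :: rest).getLast? = some t := by
      rw [hps, List.getLast?_cons_cons] at hlast
      exact hlast
    have hchain2 : List.Chain' G.Adj (s :: q :: rest) := hps ▸ hchain
    refine ⟨fun i => bwalk s (f i) (q :: rest) (m * (i : ℕ)), fun i => ?_, ?_⟩
    · refine ⟨⟨bwalk_ne_nil _ _ _ _, bwalk_chain' (fadj i) hchain2 _⟩, bwalk_head? _ _ _ _, ?_⟩
      rw [bwalk_getLast? hqrest, hlast2]
    · rintro e ⟨i, j, hij, r, hi, hj⟩
      have hE : ∀ k : Fin p, walkEdges (bwalk s (f k) (q :: rest) (m * (k : ℕ)))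
          = List.replicate (2 * (m * (k : ℕ))) s(s, f k) ++ pe := by
        intro k
        rw [bwalk_walkEdges, hpe_def, hps]
      rw [hE i, getElem?_replicate_append] at hi
      rw [hE j, getElem?_replicate_append] at hj
      have hpes : ∀ (r' : ℕ), pe[r']? = some e → s ∈ e → r' = 0 ∧ e = s(s, q) := by
        intro r' h hsm
        obtain ⟨a, c, ha, hc, rfl⟩ := walkEdges_getElem?_some pv.support r' _ h
        have h0 : pv.support[0]? = some s := by rw [hps]; simp
        have hlen : 0 < pv.support.length := by rw [hps]; simp
        rcases Sym2.mem_iff.1 hsm with rfl | rfl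
        · have h0r : (0 : ℕ) = r' := (List.getElem?_inj hlen hnd).1 (h0.trans ha.symm)
          refine ⟨h0r.symm, ?_⟩
          rw [← h0r, hps] at hc
          simp only [List.getElem?_cons_succ, List.getElem?_cons_zero, Option.some.injEq] at hc
          rw [hc]
        · have h0r : (0 : ℕ) = r' + 1 := (List.getElem?_inj hlen hnd).1 (h0.trans hc.symm)
          exact absurd h0r (by omega)
      by_cases h1 : r < 2 * (m * (i : ℕ)) <;> by_cases h2 : r < 2 * (m * (j : ℕ))
      · rw [if_pos h1] at hi
        rw [if_pos h2] at hj
        have heq : s(s, f i) = s(s, f j) := Option.some_inj.1 (hi.trans hj.symm)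
        exact hij (finj (sym2_right_eq (fadj i).ne' heq))
      · rw [if_pos h1] at hi
        rw [if_neg h2] at hj
        have he : e = s(s, f i) := (Option.some_inj.1 hi).symm
        have hsm : s ∈ e := by rw [he]; exact Sym2.mem_mk_left _ _
        obtain ⟨hr0, heq⟩ := hpes _ hj hsm
        have hfi : f i = q := sym2_right_eq (fadj i).ne' (he.symm.trans heq)
        have hi0 : (i : ℕ) = 0 := fq i hfi
        rw [hi0] at h1
        omega
      · rw [if_neg h1] at hi
        rw [if_pos h2] at hj
        have he : e = s(s, f j) := (Option.some_inj.1 hj).symm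
        have hsm : s ∈ e := by rw [he]; exact Sym2.mem_mk_left _ _
        obtain ⟨hr0, heq⟩ := hpes _ hi hsm
        have hfj : f j = q := sym2_right_eq (fadj j).ne' (he.symm.trans heq)
        have hj0 : (j : ℕ) = 0 := fq j hfj
        rw [hj0] at h2
        omega
      · rw [if_neg h1] at hi
        rw [if_neg h2] at hj
        have hi' : r - 2 * (m * (i : ℕ)) < m := by
          by_contra hcon
          rw [List.getElem?_eq_none (by rw [← hm]; omega)] at hi
          exact nomatch hi
        have hj' : r - 2 * (m * (j : ℕ)) < m := by
          by_contra hcon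
          rw [List.getElem?_eq_none (by rw [← hm]; omega)] at hj
          exact nomatch hj
        have hij' : (i : ℕ) ≠ (j : ℕ) := fun h => hij (Fin.ext h)
        rcases Nat.lt_or_ge (i : ℕ) (j : ℕ) with hlt | hge
        · have hkey : 2 * (m * (i : ℕ)) + m ≤ 2 * (m * (j : ℕ)) := by
            have h3 : (i : ℕ) + 1 ≤ (j : ℕ) := hlt
            have h4 : m * ((i : ℕ) + 1) ≤ m * (j : ℕ) := Nat.mul_le_mul_left m h3
            nlinarith
          omega
        · have hlt : (j : ℕ) < (i : ℕ) := lt_of_le_of_ne hge hij'.symm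
          have hkey : 2 * (m * (j : ℕ)) + m ≤ 2 * (m * (i : ℕ)) := by
            have h3 : (j : ℕ) + 1 ≤ (i : ℕ) := hlt
            have h4 : m * ((j : ℕ) + 1) ≤ m * (i : ℕ) := Nat.mul_le_mul_left m h3
            nlinarith
          omega


end PaperRCA
end
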